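/- arXiv:2603.17650 — 5 statements merged into one kernel-verified Lean document; each statement's English description precedes it below -/
import Mathlib

section
/- Let m ≥ 1, let f : ℝ^m → ℝ be smooth, and let v : ℝ^m → ℝ be smooth with compact support. Then the function F(t) = ∫_{ℝ^m} ( ‖∇(f+tv)(x)‖⁴ − ‖∇f(x)‖⁴ ) dx is well defined (the integrand is compactly supported for each t), F is differentiable at t = 0, and F'(0) = −4 ∫_{ℝ^m} v(x) · div(‖∇f‖²∇f)(x) dx. -/
open scoped BigOperators

/-- Partial derivative `∂f/∂x_i` of a scalar function on `ℝ^m`. -/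
noncomputable def pd1 {m : ℕ} (f : (Fin m → ℝ) → ℝ) (i : Fin m) (x : Fin m → ℝ) : ℝ :=
  fderiv ℝ f x (Pi.single i 1)

open MeasureTheory

namespace SymphonicAux

variable {m : ℕ}

lemma pd1_contDiff {f : (Fin m → ℝ) → ℝ} (hf : ContDiff ℝ (⊤ : ℕ∞) f) (i : Fin m) :
    ContDiff ℝ (⊤ : ℕ∞) (pd1 f i) :=
  (hf.fderiv_right (by exact_mod_cast le_top)).clm_apply contDiff_const

lemma pd1_zero_of_nmem {v : (Fin m → ℝ) → ℝ} (i : Fin m) {x : Fin m → ℝ}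
    (hx : x ∉ tsupport v) : pd1 v i x = 0 := by
  have h : fderiv ℝ v x = 0 := by
    by_contra h
    exact hx (support_fderiv_subset ℝ (Function.mem_support.2 h))
  simp [pd1, h]

lemma pd1_add_mul {f v : (Fin m → ℝ) → ℝ} (hf : Differentiable ℝ f)
    (hv : Differentiable ℝ v) (t : ℝ) (i : Fin m) (x : Fin m → ℝ) :
    pd1 (fun y => f y + t * v y) i x = pd1 f i x + t * pd1 v i x := by
  have h1 := ((hf x).hasFDerivAt).fun_add (((hv x).hasFDerivAt).fun_const_smul t)
  simp only [smul_eq_mul] at h1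
  unfold pd1
  rw [h1.fderiv]
  simp

/-- `‖∇f‖²` -/
noncomputable def AA (f : (Fin m → ℝ) → ℝ) (x : Fin m → ℝ) : ℝ := ∑ i, pd1 f i x ^ 2

/-- `2⟨∇f, ∇v⟩` -/
noncomputable def BB (f v : (Fin m → ℝ) → ℝ) (x : Fin m → ℝ) : ℝ :=
  ∑ i, 2 * pd1 f i x * pd1 v i x

/-- `‖∇v‖²` -/
noncomputable def CC (v : (Fin m → ℝ) → ℝ) (x : Fin m → ℝ) : ℝ := ∑ i, pd1 v i x ^ 2

lemma AA_contDiff {f : (Fin m → ℝ) → ℝ} (hf : ContDiff ℝ (⊤ : ℕ∞) f) :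
    ContDiff ℝ (⊤ : ℕ∞) (AA f) :=
  ContDiff.sum fun i _ => (pd1_contDiff hf i).pow 2

lemma BB_continuous {f v : (Fin m → ℝ) → ℝ} (hf : ContDiff ℝ (⊤ : ℕ∞) f)
    (hv : ContDiff ℝ (⊤ : ℕ∞) v) : Continuous (BB f v) :=
  continuous_finset_sum _ fun i _ =>
    ((continuous_const.mul (pd1_contDiff hf i).continuous).mul (pd1_contDiff hv i).continuous)

lemma CC_continuous {v : (Fin m → ℝ) → ℝ} (hv : ContDiff ℝ (⊤ : ℕ∞) v) :
    Continuous (CC v) :=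
  continuous_finset_sum _ fun i _ => ((pd1_contDiff hv i).continuous.pow 2)

lemma BB_zero {f v : (Fin m → ℝ) → ℝ} {x : Fin m → ℝ} (hx : x ∉ tsupport v) :
    BB f v x = 0 := by
  unfold BB
  refine Finset.sum_eq_zero fun i _ => ?_
  rw [pd1_zero_of_nmem i hx]; ring

lemma CC_zero {v : (Fin m → ℝ) → ℝ} {x : Fin m → ℝ} (hx : x ∉ tsupport v) :
    CC v x = 0 := by
  unfold CC
  refine Finset.sum_eq_zero fun i _ => ?_
  rw [pd1_zero_of_nmem i hx]; ring

lemma AA_expand {f v : (Fin m → ℝ) → ℝ} (hf : Differentiable ℝ f)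
    (hv : Differentiable ℝ v) (t : ℝ) (x : Fin m → ℝ) :
    AA (fun y => f y + t * v y) x = AA f x + t * BB f v x + t ^ 2 * CC v x := by
  unfold AA BB CC
  rw [Finset.mul_sum, Finset.mul_sum, ← Finset.sum_add_distrib, ← Finset.sum_add_distrib]
  refine Finset.sum_congr rfl fun i _ => ?_
  rw [pd1_add_mul hf hv]
  ring

lemma integrand_eq {f v : (Fin m → ℝ) → ℝ} (hf : Differentiable ℝ f)
    (hv : Differentiable ℝ v) (t : ℝ) (x : Fin m → ℝ) :
    (∑ i, pd1 (fun y => f y + t * v y) i x ^ 2) ^ 2 - (∑ i, pd1 f i x ^ 2) ^ 2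
      = t * (2 * AA f x * BB f v x)
        + t ^ 2 * (BB f v x ^ 2 + 2 * AA f x * CC v x)
        + t ^ 3 * (2 * BB f v x * CC v x) + t ^ 4 * (CC v x ^ 2) := by
  have h := AA_expand hf hv t x
  unfold AA at h ⊢
  rw [h]
  ring

lemma c1_eq (f v : (Fin m → ℝ) → ℝ) (x : Fin m → ℝ) :
    2 * AA f x * BB f v x
      = ∑ i, 4 * ((∑ j, pd1 f j x ^ 2) * pd1 f i x * pd1 v i x) := by
  unfold AA BB
  rw [Finset.mul_sum]
  exact Finset.sum_congr rfl fun i _ => by ring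

end SymphonicAux

open SymphonicAux

/-- First variation of the symphonic energy of a scalar function: for smooth `f` and smooth
compactly supported `v`, the function `F(t) = ∫ (‖∇(f+tv)‖⁴ − ‖∇f‖⁴)` has compactly supported
integrand for each `t`, and is differentiable at `t = 0` with
`F'(0) = −4 ∫ v · div(‖∇f‖²∇f)`. -/
theorem symphonic_first_variation_scalar (m : ℕ) (hm : 1 ≤ m) (f v : (Fin m → ℝ) → ℝ)
    (hf : ContDiff ℝ (⊤ : ℕ∞) f) (hv : ContDiff ℝ (⊤ : ℕ∞) v) (hvs : HasCompactSupport v) :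
    (∀ t : ℝ, HasCompactSupport fun x =>
        (∑ i, pd1 (fun y => f y + t * v y) i x ^ 2) ^ 2 - (∑ i, pd1 f i x ^ 2) ^ 2)
      ∧ HasDerivAt (fun t : ℝ => ∫ x : Fin m → ℝ,
            ((∑ i, pd1 (fun y => f y + t * v y) i x ^ 2) ^ 2 - (∑ i, pd1 f i x ^ 2) ^ 2))
          (-4 * ∫ x : Fin m → ℝ,
            v x * ∑ i, pd1 (fun y => (∑ j, pd1 f j y ^ 2) * pd1 f i y) i x) 0 := by
  have hfd : Differentiable ℝ f := hf.differentiable (by simp)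
  have hvd : Differentiable ℝ v := hv.differentiable (by simp)
  -- general integrability helper
  have key : ∀ c : (Fin m → ℝ) → ℝ, Continuous c → (∀ x ∉ tsupport v, c x = 0) →
      Integrable c := fun c hc h0 =>
    hc.integrable_of_hasCompactSupport (HasCompactSupport.intro hvs h0)
  have hAc : Continuous (AA f) := (AA_contDiff hf).continuous
  have hBc : Continuous (BB f v) := BB_continuous hf hv
  have hCc : Continuous (CC v) := CC_continuous hv
  -- the four coefficient functions
  set c1 : (Fin m → ℝ) → ℝ := fun x => 2 * AA f x * BB f v x with hc1
  set c2 : (Fin m → ℝ) → ℝ := fun x => BB f v x ^ 2 + 2 * AA f x * CC v x with hc2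
  set c3 : (Fin m → ℝ) → ℝ := fun x => 2 * BB f v x * CC v x with hc3
  set c4 : (Fin m → ℝ) → ℝ := fun x => CC v x ^ 2 with hc4
  have hi1 : Integrable c1 :=
    key _ ((continuous_const.mul hAc).mul hBc) fun x hx => by simp [hc1, BB_zero hx]
  have hi2 : Integrable c2 :=
    key _ ((hBc.pow 2).add ((continuous_const.mul hAc).mul hCc))
      fun x hx => by simp [hc2, BB_zero hx, CC_zero hx]
  have hi3 : Integrable c3 :=
    key _ ((continuous_const.mul hBc).mul hCc) fun x hx => by simp [hc3, BB_zero hx]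
  have hi4 : Integrable c4 := key _ (hCc.pow 2) fun x hx => by simp [hc4, CC_zero hx]
  constructor
  · intro t
    refine HasCompactSupport.intro hvs fun x hx => ?_
    rw [integrand_eq hfd hvd t x, BB_zero hx, CC_zero hx]
    ring
  · -- the function is a polynomial in t
    have hFeq : (fun t : ℝ => ∫ x : Fin m → ℝ,
          ((∑ i, pd1 (fun y => f y + t * v y) i x ^ 2) ^ 2 - (∑ i, pd1 f i x ^ 2) ^ 2))
        = fun t : ℝ => t * (∫ x, c1 x) + t ^ 2 * (∫ x, c2 x) + t ^ 3 * (∫ x, c3 x)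
            + t ^ 4 * (∫ x, c4 x) := by
      funext t
      rw [show (fun x : Fin m → ℝ =>
            ((∑ i, pd1 (fun y => f y + t * v y) i x ^ 2) ^ 2 - (∑ i, pd1 f i x ^ 2) ^ 2))
          = fun x => t * c1 x + t ^ 2 * c2 x + t ^ 3 * c3 x + t ^ 4 * c4 x from
        funext fun x => integrand_eq hfd hvd t x]
      have h12 : Integrable (fun x => t * c1 x + t ^ 2 * c2 x) (volume) :=
        (hi1.const_mul t).add (hi2.const_mul (t ^ 2))
      have h123 : Integrable (fun x => t * c1 x + t ^ 2 * c2 x + t ^ 3 * c3 x) (volume) :=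
        h12.add (hi3.const_mul (t ^ 3))
      rw [integral_add (f := fun x => t * c1 x + t ^ 2 * c2 x + t ^ 3 * c3 x)
          (g := fun x => t ^ 4 * c4 x) h123 (hi4.const_mul (t ^ 4)),
        integral_add (f := fun x => t * c1 x + t ^ 2 * c2 x)
          (g := fun x => t ^ 3 * c3 x) h12 (hi3.const_mul (t ^ 3)),
        integral_add (f := fun x => t * c1 x) (g := fun x => t ^ 2 * c2 x)
          (hi1.const_mul t) (hi2.const_mul (t ^ 2)),
        integral_const_mul, integral_const_mul, integral_const_mul, integral_const_mul]
    rw [hFeq]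
    -- derivative of the polynomial at 0 is ∫ c1
    have hD : HasDerivAt (fun t : ℝ => t * (∫ x, c1 x) + t ^ 2 * (∫ x, c2 x)
        + t ^ 3 * (∫ x, c3 x) + t ^ 4 * (∫ x, c4 x)) (∫ x, c1 x) 0 := by
      have h1 : HasDerivAt (fun t : ℝ => t * (∫ x, c1 x)) (∫ x, c1 x) 0 := by
        simpa using (hasDerivAt_id (0 : ℝ)).mul_const (∫ x, c1 x)
      have h2 : HasDerivAt (fun t : ℝ => t ^ 2 * (∫ x, c2 x)) 0 0 := by
        simpa using (hasDerivAt_pow 2 (0 : ℝ)).mul_const (∫ x, c2 x)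
      have h3 : HasDerivAt (fun t : ℝ => t ^ 3 * (∫ x, c3 x)) 0 0 := by
        simpa using (hasDerivAt_pow 3 (0 : ℝ)).mul_const (∫ x, c3 x)
      have h4 : HasDerivAt (fun t : ℝ => t ^ 4 * (∫ x, c4 x)) 0 0 := by
        simpa using (hasDerivAt_pow 4 (0 : ℝ)).mul_const (∫ x, c4 x)
      simpa using ((h1.fun_add h2).fun_add h3).fun_add h4
    -- identify ∫ c1 with the divergence expression via integration by parts
    have hval : (∫ x, c1 x)
        = -4 * ∫ x : Fin m → ℝ,
            v x * ∑ i, pd1 (fun y => (∑ j, pd1 f j y ^ 2) * pd1 f i y) i x := by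
      -- the stress components
      set σ : Fin m → (Fin m → ℝ) → ℝ :=
        fun i y => (∑ j, pd1 f j y ^ 2) * pd1 f i y with hσdef
      have hσ : ∀ i, ContDiff ℝ (⊤ : ℕ∞) (σ i) :=
        fun i => (AA_contDiff hf).mul (pd1_contDiff hf i)
      have hσc : ∀ i, Continuous (σ i) := fun i => (hσ i).continuous
      have hσd : ∀ i, Differentiable ℝ (σ i) := fun i => (hσ i).differentiable (by simp)
      have hdσc : ∀ i, Continuous (pd1 (σ i) i) := fun i => (pd1_contDiff (hσ i) i).continuous
      have hwc : ∀ i : Fin m, Continuous (pd1 v i) := fun i => (pd1_contDiff hv i).continuous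
      -- step 1 : c1 = ∑ i, 4 * σ i * ∂ᵢ v  pointwise
      have hstep1 : (∫ x, c1 x) = ∑ i, ∫ x, 4 * (σ i x * pd1 v i x) := by
        rw [show c1 = fun x => ∑ i, 4 * (σ i x * pd1 v i x) from
          funext fun x => c1_eq f v x]
        exact integral_finset_sum _ fun i _ =>
          (key _ (continuous_const.mul ((hσc i).mul (hwc i)))
            fun x hx => by rw [pd1_zero_of_nmem i hx]; ring)
      -- step 2 : integration by parts in each direction
      have hIBP : ∀ i : Fin m, (∫ x, σ i x * pd1 v i x) = - ∫ x, pd1 (σ i) i x * v x := by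
        intro i
        have hz : ∀ x ∉ tsupport v, fderiv ℝ v x (Pi.single i 1) = 0 := fun x hx => by
          have h := pd1_zero_of_nmem (v := v) i hx
          simpa [pd1] using h
        have := integral_mul_fderiv_eq_neg_fderiv_mul_of_integrable
          (μ := (volume : Measure (Fin m → ℝ))) (f := σ i) (g := v) (v := Pi.single i 1)
          (key (fun x => fderiv ℝ (σ i) x (Pi.single i 1) * v x)
            ((hdσc i).mul hv.continuous) fun x hx => by
              simp [image_eq_zero_of_notMem_tsupport hx])
          (key (fun x => σ i x * fderiv ℝ v x (Pi.single i 1))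
            ((hσc i).mul (hwc i)) fun x hx => by simp [hz x hx])
          (key (fun x => σ i x * v x) ((hσc i).mul hv.continuous) fun x hx => by
            simp [image_eq_zero_of_notMem_tsupport hx])
          (fun x _ => hσd i x) (fun x _ => hvd x)
        exact this
      -- step 3 : put everything together
      have hswap : (∫ x : Fin m → ℝ, v x * ∑ i, pd1 (σ i) i x)
          = ∑ i, ∫ x, v x * pd1 (σ i) i x := by
        rw [show (fun x : Fin m → ℝ => v x * ∑ i, pd1 (σ i) i x)
            = fun x => ∑ i, v x * pd1 (σ i) i x from funext fun x => Finset.mul_sum _ _ _]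
        exact integral_finset_sum _ fun i _ =>
          key _ (hv.continuous.mul (hdσc i)) fun x hx => by
            rw [image_eq_zero_of_notMem_tsupport hx]; ring
      rw [hstep1, hswap, Finset.mul_sum]
      refine Finset.sum_congr rfl fun i _ => ?_
      rw [integral_const_mul, hIBP i]
      rw [show (fun x => v x * pd1 (σ i) i x) = fun x => pd1 (σ i) i x * v x from
        funext fun x => mul_comm _ _]
      ring
    rw [← hval]
    exact hD
end

section
/- Let f : ℝ² \ {0} → ℝ be given by f(x₁,x₂) = (x₁² + x₂²)^{1/3}. Then f is smooth on ℝ² \ {0} and satisfies the symphonic equation there: for every x ≠ 0, ∑_{i,j=1}^{2} [ (∂²f/∂x_i²)(x)·(∂f/∂x_j)(x)² + 2·(∂f/∂x_i)(x)·(∂f/∂x_j)(x)·(∂²f/∂x_i∂x_j)(x) ] = 0. -/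
open scoped BigOperators

namespace SymphAux

noncomputable def F : (Fin 2 → ℝ) → ℝ := fun y => (y 0 ^ 2 + y 1 ^ 2) ^ ((1 : ℝ) / 3)

lemma rpos {x : Fin 2 → ℝ} (hx : x ≠ 0) : 0 < x 0 ^ 2 + x 1 ^ 2 := by
  have h : x 0 ≠ 0 ∨ x 1 ≠ 0 := by
    by_contra h
    push_neg at h
    exact hx (funext fun i => by fin_cases i <;> simp [h.1, h.2])
  rcases h with h | h <;> positivity

lemma proj_hasFDerivAt (i : Fin 2) (x : Fin 2 → ℝ) :
    HasFDerivAt (fun y : Fin 2 → ℝ => y i)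
      (ContinuousLinearMap.proj i : (Fin 2 → ℝ) →L[ℝ] ℝ) x := by
  exact ((ContinuousLinearMap.proj i : (Fin 2 → ℝ) →L[ℝ] ℝ)).hasFDerivAt

lemma hasFDerivAt_phi (x : Fin 2 → ℝ) :
    HasFDerivAt (fun y : Fin 2 → ℝ => y 0 ^ 2 + y 1 ^ 2)
      ((2 * x 0) • (ContinuousLinearMap.proj 0 : (Fin 2 → ℝ) →L[ℝ] ℝ)
        + (2 * x 1) • (ContinuousLinearMap.proj 1 : (Fin 2 → ℝ) →L[ℝ] ℝ)) x := by
  have h0 := proj_hasFDerivAt 0 x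
  have h1 := proj_hasFDerivAt 1 x
  have := ((h0.mul h0).add (h1.mul h1))
  simp only [← sq] at this
  exact this.congr_fderiv (by ext v <;> simp <;> ring)

noncomputable def G (i : Fin 2) : (Fin 2 → ℝ) → ℝ :=
  fun y => 2 / 3 * y i * (y 0 ^ 2 + y 1 ^ 2) ^ (-(2 : ℝ) / 3)

lemma hasFDerivAt_F {x : Fin 2 → ℝ} (hx : x ≠ 0) :
    HasFDerivAt F
      ((1 / 3 * (x 0 ^ 2 + x 1 ^ 2) ^ ((1 : ℝ) / 3 - 1)) •
        ((2 * x 0) • (ContinuousLinearMap.proj 0 : (Fin 2 → ℝ) →L[ℝ] ℝ)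
          + (2 * x 1) • (ContinuousLinearMap.proj 1 : (Fin 2 → ℝ) →L[ℝ] ℝ))) x :=
  (hasFDerivAt_phi x).rpow_const (Or.inl (rpos hx).ne')

lemma pd1_F {x : Fin 2 → ℝ} (hx : x ≠ 0) (i : Fin 2) : pd1 F i x = G i x := by
  have h := hasFDerivAt_F hx
  have hexp : ((1 : ℝ) / 3 - 1) = -(2 : ℝ) / 3 := by norm_num
  rw [pd1, h.fderiv]
  fin_cases i <;> simp [G, hexp, Pi.single_apply] <;> ring_nf

lemma hasFDerivAt_G {x : Fin 2 → ℝ} (hx : x ≠ 0) (i : Fin 2) :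
    HasFDerivAt (G i)
      ((2 / 3 * x i) • ((-(2 : ℝ) / 3 * (x 0 ^ 2 + x 1 ^ 2) ^ (-(2 : ℝ) / 3 - 1)) •
          ((2 * x 0) • (ContinuousLinearMap.proj 0 : (Fin 2 → ℝ) →L[ℝ] ℝ)
            + (2 * x 1) • (ContinuousLinearMap.proj 1 : (Fin 2 → ℝ) →L[ℝ] ℝ)))
        + ((x 0 ^ 2 + x 1 ^ 2) ^ (-(2 : ℝ) / 3)) •
          ((2 / 3 : ℝ) • (ContinuousLinearMap.proj i : (Fin 2 → ℝ) →L[ℝ] ℝ))) x := by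
  have hc : HasFDerivAt (fun y : Fin 2 → ℝ => 2 / 3 * y i)
      ((2 / 3 : ℝ) • (ContinuousLinearMap.proj i : (Fin 2 → ℝ) →L[ℝ] ℝ)) x :=
    (proj_hasFDerivAt i x).const_mul _
  have hd : HasFDerivAt (fun y : Fin 2 → ℝ => (y 0 ^ 2 + y 1 ^ 2) ^ (-(2 : ℝ) / 3))
      ((-(2 : ℝ) / 3 * (x 0 ^ 2 + x 1 ^ 2) ^ (-(2 : ℝ) / 3 - 1)) •
        ((2 * x 0) • (ContinuousLinearMap.proj 0 : (Fin 2 → ℝ) →L[ℝ] ℝ)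
          + (2 * x 1) • (ContinuousLinearMap.proj 1 : (Fin 2 → ℝ) →L[ℝ] ℝ))) x :=
    (hasFDerivAt_phi x).rpow_const (Or.inl (rpos hx).ne')
  exact hc.mul hd

lemma pd1_pd1_F {x : Fin 2 → ℝ} (hx : x ≠ 0) (i j : Fin 2) :
    pd1 (pd1 F i) j x =
      2 / 3 * x i * (-(2 : ℝ) / 3 * (x 0 ^ 2 + x 1 ^ 2) ^ (-(2 : ℝ) / 3 - 1) * (2 * x j))
        + (x 0 ^ 2 + x 1 ^ 2) ^ (-(2 : ℝ) / 3) * (2 / 3) * (if i = j then 1 else 0) := by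
  have hU : IsOpen {y : Fin 2 → ℝ | y ≠ 0} := isOpen_compl_singleton
  have heq : pd1 F i =ᶠ[nhds x] G i :=
    Filter.eventuallyEq_of_mem (hU.mem_nhds hx) (fun y hy => pd1_F hy i)
  rw [pd1, heq.fderiv_eq, (hasFDerivAt_G hx i).fderiv]
  fin_cases i <;> fin_cases j <;> simp [Pi.single_apply]

end SymphAux

/-- The function `f(x₁,x₂) = (x₁² + x₂²)^{1/3}` is smooth on `ℝ² \ {0}` and satisfies the
symphonic equation `∑_{i,j} [∂²f/∂x_i² (∂f/∂x_j)² + 2 ∂_i f ∂_j f ∂²f/∂x_i∂x_j] = 0` there. -/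
theorem symphonic_example_cube_root :
    let f : (Fin 2 → ℝ) → ℝ := fun y => (y 0 ^ 2 + y 1 ^ 2) ^ ((1 : ℝ) / 3)
    ContDiffOn ℝ (⊤ : ℕ∞) f {x : Fin 2 → ℝ | x ≠ 0}
      ∧ ∀ x : Fin 2 → ℝ, x ≠ 0 →
          ∑ i, ∑ j, (pd1 (pd1 f i) i x * pd1 f j x ^ 2
            + 2 * pd1 f i x * pd1 f j x * pd1 (pd1 f i) j x) = 0 := by
  intro f
  constructor
  · intro x hx
    have hr : (x 0 ^ 2 + x 1 ^ 2) ≠ 0 := (SymphAux.rpos hx).ne'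
    have hφ : ContDiffAt ℝ (⊤ : ℕ∞) (fun y : Fin 2 → ℝ => y 0 ^ 2 + y 1 ^ 2) x := by
      fun_prop
    exact (hφ.rpow_const_of_ne hr).contDiffWithinAt
  · intro x hx
    have hf : f = SymphAux.F := rfl
    rw [hf]
    have hp := fun i => SymphAux.pd1_F hx i
    have hpp := fun i j => SymphAux.pd1_pd1_F hx i j
    simp only [Fin.sum_univ_two, hp, hpp, SymphAux.G]
    set r := x 0 ^ 2 + x 1 ^ 2 with hrdef
    set A := r ^ (-(2 : ℝ) / 3) with hA
    set B := r ^ (-(2 : ℝ) / 3 - 1) with hB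
    have hAB : A = B * r := by
      rw [hA, hB, ← Real.rpow_add_one (SymphAux.rpos hx).ne']
      norm_num
      rfl
    rw [hAB, hrdef]
    simp only [if_true, if_pos rfl]
    norm_num
    ring
end

section
/- Let φ : ℝ^m → ℝ^n be smooth and let v : ℝ^m → ℝ^n be smooth with compact support. Then the function F(t) = ∫_{ℝ^m} ( ‖(φ+tv)^*h‖²(x) − ‖φ^*h‖²(x) ) dx is well defined (the integrand is compactly supported for each t), F is differentiable at t = 0, and F'(0) = −4 ∫_{ℝ^m} ⟨ div σ_φ(x), v(x) ⟩ dx. -/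
open scoped BigOperators

/-- Partial derivative `∂φ/∂x_i` of a map `φ : ℝ^m → ℝ^n`. -/
noncomputable def pd {m n : ℕ} (φ : (Fin m → ℝ) → Fin n → ℝ) (i : Fin m) (x : Fin m → ℝ) :
    Fin n → ℝ :=
  fderiv ℝ φ x (Pi.single i 1)

/-- Euclidean inner product on `ℝ^n`. -/
def inn {n : ℕ} (u v : Fin n → ℝ) : ℝ := ∑ k, u k * v k

open MeasureTheory


theorem ibp0 {m : ℕ} (g : (Fin m → ℝ) → ℝ) (hg : ContDiff ℝ (⊤ : ℕ∞) g)
    (hgs : HasCompactSupport g) (i : Fin m) :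
    ∫ x : Fin m → ℝ, fderiv ℝ g x (Pi.single i 1) = 0 := by
  cases m with
  | zero => exact i.elim0
  | succ N =>
    obtain ⟨R, hR0, hRsub⟩ : ∃ R : ℝ, 0 < R ∧ tsupport g ⊆ Metric.ball 0 R := by
      rcases hgs.isBounded.subset_ball_lt 0 0 with ⟨R, hR0, hsub⟩
      exact ⟨R, hR0, hsub⟩
    set a : Fin (N + 1) → ℝ := fun _ => -R
    set b : Fin (N + 1) → ℝ := fun _ => R
    have hle : a ≤ b := fun j => by
      simp only [a, b]; linarith
    have hball : Metric.ball (0 : Fin (N+1) → ℝ) R ⊆ Set.Icc a b := by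
      intro x hx
      simp only [Metric.mem_ball, dist_zero_right] at hx
      have h : ∀ j, |x j| < R := fun j => lt_of_le_of_lt (by simpa using norm_le_pi_norm x j) hx
      refine ⟨fun j => ?_, fun j => ?_⟩
      · have := (abs_lt.1 (h j)).1; simpa [a] using this.le
      · have := (abs_lt.1 (h j)).2; simpa [b] using this.le
    -- g vanishes when some coordinate has absolute value ≥ R
    have hgz : ∀ x : Fin (N+1) → ℝ, ∀ j, R ≤ |x j| → g x = 0 := by
      intro x j hj
      apply image_eq_zero_of_notMem_tsupport
      intro hx
      have := hRsub hx
      simp only [Metric.mem_ball, dist_zero_right] at this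
      have := lt_of_le_of_lt (le_trans hj (by simpa using norm_le_pi_norm x j)) this
      exact lt_irrefl _ this
    set f : Fin (N+1) → (Fin (N+1) → ℝ) → ℝ := fun j => if j = i then g else fun _ => 0
    set f' : Fin (N+1) → (Fin (N+1) → ℝ) → (Fin (N+1) → ℝ) →L[ℝ] ℝ :=
      fun j => if j = i then fderiv ℝ g else fun _ => 0
    have key := integral_divergence_of_hasFDerivAt_off_countable' a b hle f f' ∅
      Set.countable_empty
      (fun j => by
        by_cases h : j = i
        · simp only [f, h, if_pos rfl]; exact (hg.continuous).continuousOn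
        · simp only [f, if_neg h]; exact continuousOn_const)
      (fun x _ j => by
        by_cases h : j = i
        · simp only [f, f', h, if_pos rfl]
          exact (hg.differentiable (by simp) x).hasFDerivAt
        · simp only [f, f', if_neg h]; exact hasFDerivAt_const 0 x)
      (by
        have hcont : Continuous fun x : Fin (N+1) → ℝ => fderiv ℝ g x (Pi.single i 1) := by
          exact (ContinuousLinearMap.apply ℝ ℝ (Pi.single i 1 : Fin (N+1) → ℝ)).continuous.comp
            (hg.continuous_fderiv (by simp))
        have : (fun x : Fin (N+1) → ℝ => ∑ j, f' j x (Pi.single j 1)) =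
            fun x => fderiv ℝ g x (Pi.single i 1) := by
          funext x
          rw [Finset.sum_eq_single_of_mem i (Finset.mem_univ i)]
          · simp [f']
          · intro j _ hj
            simp [f', if_neg hj]
        rw [this]
        exact (hcont.continuousOn.integrableOn_compact isCompact_Icc)
      )
    have hfz : ∀ x : Fin (N+1) → ℝ, x ∉ Set.Icc a b → fderiv ℝ g x (Pi.single i 1) = 0 := by
      intro x hx
      have hxt : x ∉ tsupport g := fun h => hx (hball (hRsub h))
      have : g =ᶠ[nhds x] 0 := by
        have : (tsupport g)ᶜ ∈ nhds x :=
          (isOpen_compl_iff.2 (isClosed_tsupport g)).mem_nhds hxt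
        filter_upwards [this] with y hy
        exact image_eq_zero_of_notMem_tsupport hy
      rw [this.fderiv_eq]
      rw [show (0 : (Fin (N+1) → ℝ) → ℝ) = fun _ => (0:ℝ) from rfl, fderiv_fun_const]
      simp
    have hLHS : (∫ x in Set.Icc a b, ∑ j, f' j x (Pi.single j 1)) =
        ∫ x : Fin (N+1) → ℝ, fderiv ℝ g x (Pi.single i 1) := by
      have hsum : (fun x : Fin (N+1) → ℝ => ∑ j, f' j x (Pi.single j 1)) =
          fun x => fderiv ℝ g x (Pi.single i 1) := by
        funext x
        rw [Finset.sum_eq_single_of_mem i (Finset.mem_univ i)]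
        · simp [f']
        · intro j _ hj
          simp [f', if_neg hj]
      rw [hsum]
      exact setIntegral_eq_integral_of_forall_compl_eq_zero hfz
    have hRHS : ∀ j : Fin (N+1),
        ((∫ x in Set.Icc (a ∘ j.succAbove) (b ∘ j.succAbove),
            f j (j.insertNth (b j) x)) -
          ∫ x in Set.Icc (a ∘ j.succAbove) (b ∘ j.succAbove),
            f j (j.insertNth (a j) x)) = 0 := by
      intro j
      have h1 : ∀ y : Fin N → ℝ, f j (j.insertNth (b j) y) = 0 := by
        intro y
        by_cases h : j = i
        · subst h
          simp only [f, if_pos rfl]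
          apply hgz _ j
          rw [Fin.insertNth_apply_same]
          simp [b, abs_of_pos hR0]
        · simp [f, if_neg h]
      have h2 : ∀ y : Fin N → ℝ, f j (j.insertNth (a j) y) = 0 := by
        intro y
        by_cases h : j = i
        · subst h
          simp only [f, if_pos rfl]
          apply hgz _ j
          rw [Fin.insertNth_apply_same]
          simp [a, abs_of_pos hR0]
        · simp [f, if_neg h]
      simp [h1, h2]
    rw [hLHS] at key
    rw [key, Finset.sum_eq_zero fun j _ => hRHS j]

variable {m n : ℕ}

lemma inn_comm (u w : Fin n → ℝ) : inn u w = inn w u := by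
  unfold inn; exact Finset.sum_congr rfl fun k _ => mul_comm _ _

lemma inn_add_right (u a b : Fin n → ℝ) : inn u (a + b) = inn u a + inn u b := by
  unfold inn; rw [← Finset.sum_add_distrib]
  exact Finset.sum_congr rfl fun k _ => by simp [mul_add]

lemma inn_smul_right (t : ℝ) (u a : Fin n → ℝ) : inn u (t • a) = t * inn u a := by
  unfold inn; rw [Finset.mul_sum]
  exact Finset.sum_congr rfl fun k _ => by simp; ring

lemma inn_zero_right (u : Fin n → ℝ) : inn u 0 = 0 := by simp [inn]

lemma inn_zero_left (u : Fin n → ℝ) : inn 0 u = 0 := by simp [inn]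

lemma inn_sum_left {ι : Type*} (s : Finset ι) (f : ι → Fin n → ℝ) (u : Fin n → ℝ) :
    inn (∑ i ∈ s, f i) u = ∑ i ∈ s, inn (f i) u := by
  unfold inn
  rw [Finset.sum_comm]
  exact Finset.sum_congr rfl fun k _ => by rw [Finset.sum_apply, Finset.sum_mul]

lemma inn_add_left (a b u : Fin n → ℝ) : inn (a + b) u = inn a u + inn b u := by
  rw [inn_comm, inn_add_right, inn_comm u a, inn_comm u b]

lemma inn_smul_left (t : ℝ) (u a : Fin n → ℝ) : inn (t • u) a = t * inn u a := by
  rw [inn_comm, inn_smul_right, inn_comm]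

lemma continuous_inn {α : Type*} [TopologicalSpace α] {f g : α → Fin n → ℝ}
    (hf : Continuous f) (hg : Continuous g) : Continuous fun x => inn (f x) (g x) := by
  unfold inn
  exact continuous_finset_sum _ fun k _ =>
    ((continuous_apply k).comp hf).mul ((continuous_apply k).comp hg)

lemma contDiff_inn {f g : (Fin m → ℝ) → Fin n → ℝ}
    (hf : ContDiff ℝ (⊤ : ℕ∞) f) (hg : ContDiff ℝ (⊤ : ℕ∞) g) :
    ContDiff ℝ (⊤ : ℕ∞) fun x => inn (f x) (g x) := by
  unfold inn
  refine ContDiff.sum fun k _ => ContDiff.mul ?_ ?_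
  · exact (((ContinuousLinearMap.proj k).contDiff).comp hf)
  · exact (((ContinuousLinearMap.proj k).contDiff).comp hg)

lemma contDiff_pd {φ : (Fin m → ℝ) → Fin n → ℝ} (hφ : ContDiff ℝ (⊤ : ℕ∞) φ) (i : Fin m) :
    ContDiff ℝ (⊤ : ℕ∞) (pd φ i) := by
  unfold pd
  exact (hφ.fderiv_right (by exact_mod_cast le_top)).clm_apply contDiff_const

lemma continuous_pd {φ : (Fin m → ℝ) → Fin n → ℝ} (hφ : ContDiff ℝ (⊤ : ℕ∞) φ) (i : Fin m) :
    Continuous (pd φ i) := (contDiff_pd hφ i).continuous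

lemma pd_eq_zero_of_nmem {v : (Fin m → ℝ) → Fin n → ℝ} {x : Fin m → ℝ}
    (hx : x ∉ tsupport v) (i : Fin m) : pd v i x = 0 := by
  unfold pd
  have hev : v =ᶠ[nhds x] (fun _ => (0 : Fin n → ℝ)) := by
    have : (tsupport v)ᶜ ∈ nhds x :=
      (isOpen_compl_iff.2 (isClosed_tsupport v)).mem_nhds hx
    filter_upwards [this] with y hy
    exact image_eq_zero_of_notMem_tsupport hy
  rw [hev.fderiv_eq, fderiv_fun_const]
  simp

lemma pd_add_smul {φ v : (Fin m → ℝ) → Fin n → ℝ}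
    (hφ : ContDiff ℝ (⊤ : ℕ∞) φ) (hv : ContDiff ℝ (⊤ : ℕ∞) v) (t : ℝ) (i : Fin m)
    (x : Fin m → ℝ) :
    pd (fun y => φ y + t • v y) i x = pd φ i x + t • pd v i x := by
  unfold pd
  have hφd : DifferentiableAt ℝ φ x := (hφ.differentiable (by simp)) x
  have hvd : DifferentiableAt ℝ v x := (hv.differentiable (by simp)) x
  rw [fderiv_fun_add (g := fun y => t • v y) hφd (hvd.const_smul t), fderiv_fun_const_smul hvd t]
  simp

/-- Product rule in direction `i` for the inner product of two maps. -/
lemma pd_inn {f w : (Fin m → ℝ) → Fin n → ℝ} {x : Fin m → ℝ}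
    (hf : DifferentiableAt ℝ f x) (hw : DifferentiableAt ℝ w x) (i : Fin m) :
    fderiv ℝ (fun y => inn (f y) (w y)) x (Pi.single i 1) =
      inn (pd f i x) (w x) + inn (f x) (pd w i x) := by
  have hk : ∀ k : Fin n, HasFDerivAt (fun y => f y k * w y k)
      (f x k • ((ContinuousLinearMap.proj k).comp (fderiv ℝ w x)) +
        w x k • ((ContinuousLinearMap.proj k).comp (fderiv ℝ f x))) x := by
    intro k
    have h1 : HasFDerivAt (fun y => f y k)
        ((ContinuousLinearMap.proj k).comp (fderiv ℝ f x)) x := by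
      exact (ContinuousLinearMap.proj k).hasFDerivAt.comp x hf.hasFDerivAt
    have h2 : HasFDerivAt (fun y => w y k)
        ((ContinuousLinearMap.proj k).comp (fderiv ℝ w x)) x := by
      exact (ContinuousLinearMap.proj k).hasFDerivAt.comp x hw.hasFDerivAt
    exact h1.mul h2
  have hsum : HasFDerivAt (fun y => inn (f y) (w y))
      (∑ k, (f x k • ((ContinuousLinearMap.proj k).comp (fderiv ℝ w x)) +
        w x k • ((ContinuousLinearMap.proj k).comp (fderiv ℝ f x)))) x := by
    unfold inn
    exact HasFDerivAt.fun_sum fun k _ => hk k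
  rw [hsum.fderiv]
  rw [ContinuousLinearMap.sum_apply]
  unfold pd inn
  rw [← Finset.sum_add_distrib]
  exact Finset.sum_congr rfl fun k _ => by simp; ring

/-- Integration by parts. -/
lemma ibp {f v : (Fin m → ℝ) → Fin n → ℝ}
    (hf : ContDiff ℝ (⊤ : ℕ∞) f) (hv : ContDiff ℝ (⊤ : ℕ∞) v) (hvs : HasCompactSupport v)
    (i : Fin m) :
    ∫ x : Fin m → ℝ, inn (f x) (pd v i x) = - ∫ x : Fin m → ℝ, inn (pd f i x) (v x) := by
  have hg : ContDiff ℝ (⊤ : ℕ∞) fun x => inn (f x) (v x) := contDiff_inn hf hv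
  have hgs : HasCompactSupport fun x => inn (f x) (v x) :=
    HasCompactSupport.intro hvs fun x hx => by
      rw [image_eq_zero_of_notMem_tsupport hx, inn_zero_right]
  have h0 := ibp0 _ hg hgs i
  have hpt : ∀ x, fderiv ℝ (fun y => inn (f y) (v y)) x (Pi.single i 1) =
      inn (pd f i x) (v x) + inn (f x) (pd v i x) := fun x =>
    pd_inn ((hf.differentiable (by simp)) x)
      ((hv.differentiable (by simp)) x) i
  rw [MeasureTheory.integral_congr_ae (Filter.Eventually.of_forall hpt)] at h0
  have I1 : MeasureTheory.Integrable fun x => inn (pd f i x) (v x) := by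
    apply Continuous.integrable_of_hasCompactSupport
    · exact continuous_inn (continuous_pd hf i) hv.continuous
    · exact HasCompactSupport.intro hvs fun x hx => by
        rw [image_eq_zero_of_notMem_tsupport hx, inn_zero_right]
  have I2 : MeasureTheory.Integrable fun x => inn (f x) (pd v i x) := by
    apply Continuous.integrable_of_hasCompactSupport
    · exact continuous_inn hf.continuous (continuous_pd hv i)
    · exact HasCompactSupport.intro hvs fun x hx => by
        rw [pd_eq_zero_of_nmem hx, inn_zero_right]
  rw [MeasureTheory.integral_add I1 I2] at h0
  linarith


/-- First variation of the symphonic energy: for smooth `φ : ℝ^m → ℝ^n` and smooth compactly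
supported `v`, the function `F(t) = ∫ (‖(φ+tv)^*h‖² − ‖φ^*h‖²)` has compactly supported
integrand for each `t`, and is differentiable at `t = 0` with
`F'(0) = −4 ∫ ⟨div σ_φ, v⟩`. -/
theorem symphonic_first_variation (m n : ℕ) (φ v : (Fin m → ℝ) → Fin n → ℝ)
    (hφ : ContDiff ℝ (⊤ : ℕ∞) φ) (hv : ContDiff ℝ (⊤ : ℕ∞) v) (hvs : HasCompactSupport v) :
    (∀ t : ℝ, HasCompactSupport fun x : Fin m → ℝ =>
        (∑ i, ∑ j, inn (pd (fun y => φ y + t • v y) i x) (pd (fun y => φ y + t • v y) j x) ^ 2)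
          - ∑ i, ∑ j, inn (pd φ i x) (pd φ j x) ^ 2)
      ∧ HasDerivAt (fun t : ℝ => ∫ x : Fin m → ℝ,
            ((∑ i, ∑ j,
                inn (pd (fun y => φ y + t • v y) i x) (pd (fun y => φ y + t • v y) j x) ^ 2)
              - ∑ i, ∑ j, inn (pd φ i x) (pd φ j x) ^ 2))
          (-4 * ∫ x : Fin m → ℝ,
            inn (∑ i, pd (fun y => ∑ j, inn (pd φ i y) (pd φ j y) • pd φ j y) i x) (v x)) 0 := by
  classical
  -- the expansion of the perturbed inner products
  have hexp : ∀ (t : ℝ) (i j : Fin m) (x : Fin m → ℝ),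
      inn (pd (fun y => φ y + t • v y) i x) (pd (fun y => φ y + t • v y) j x)
        = inn (pd φ i x) (pd φ j x)
          + t * (inn (pd φ i x) (pd v j x) + inn (pd v i x) (pd φ j x))
          + t ^ 2 * inn (pd v i x) (pd v j x) := by
    intro t i j x
    rw [pd_add_smul hφ hv, pd_add_smul hφ hv, inn_add_left, inn_add_right, inn_add_right,
      inn_smul_left, inn_smul_left, inn_smul_right, inn_smul_right]
    ring
  have hker : ∀ x : Fin m → ℝ, x ∉ tsupport v → ∀ i : Fin m, pd v i x = 0 :=
    fun x hx i => pd_eq_zero_of_nmem hx i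
  constructor
  · -- compact support of the integrand
    intro t
    apply HasCompactSupport.intro hvs
    intro x hx
    simp only [hexp, hker x hx, inn_zero_left, inn_zero_right, mul_zero, add_zero, zero_add,
      sub_self]
  · -- coefficient functions of the polynomial in t
    set A : (Fin m → ℝ) → ℝ := fun x => ∑ i, ∑ j,
      2 * inn (pd φ i x) (pd φ j x) * (inn (pd φ i x) (pd v j x) + inn (pd v i x) (pd φ j x))
      with hA
    set B : (Fin m → ℝ) → ℝ := fun x => ∑ i, ∑ j,
      ((inn (pd φ i x) (pd v j x) + inn (pd v i x) (pd φ j x)) ^ 2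
        + 2 * inn (pd φ i x) (pd φ j x) * inn (pd v i x) (pd v j x)) with hB
    set C : (Fin m → ℝ) → ℝ := fun x => ∑ i, ∑ j,
      2 * (inn (pd φ i x) (pd v j x) + inn (pd v i x) (pd φ j x)) * inn (pd v i x) (pd v j x)
      with hC
    set D : (Fin m → ℝ) → ℝ := fun x => ∑ i, ∑ j, inn (pd v i x) (pd v j x) ^ 2 with hD
    -- pointwise polynomial identity
    have hpt : ∀ (t : ℝ) (x : Fin m → ℝ),
        ((∑ i, ∑ j,
            inn (pd (fun y => φ y + t • v y) i x) (pd (fun y => φ y + t • v y) j x) ^ 2)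
          - ∑ i, ∑ j, inn (pd φ i x) (pd φ j x) ^ 2)
        = t * A x + t ^ 2 * B x + t ^ 3 * C x + t ^ 4 * D x := by
      intro t x
      rw [hA, hB, hC, hD]
      simp only [Finset.mul_sum, ← Finset.sum_add_distrib, ← Finset.sum_sub_distrib]
      apply Finset.sum_congr rfl
      intro i _
      apply Finset.sum_congr rfl
      intro j _
      rw [hexp]
      ring
    -- continuity of the building blocks
    have cP : ∀ i : Fin m, Continuous (pd φ i) := fun i => continuous_pd hφ i
    have cV : ∀ i : Fin m, Continuous (pd v i) := fun i => continuous_pd hv i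
    -- integrability of the coefficient functions
    have mkInt : ∀ (f : (Fin m → ℝ) → ℝ), Continuous f →
        (∀ x, x ∉ tsupport v → f x = 0) → MeasureTheory.Integrable f := by
      intro f hf h0
      exact hf.integrable_of_hasCompactSupport (HasCompactSupport.intro hvs h0)
    have intA : MeasureTheory.Integrable A := by
      apply mkInt
      · exact continuous_finset_sum _ fun i _ => continuous_finset_sum _ fun j _ =>
          ((continuous_const.mul (continuous_inn (cP i) (cP j))).mul
            ((continuous_inn (cP i) (cV j)).add (continuous_inn (cV i) (cP j))))
      · intro x hx
        simp only [hA, hker x hx, inn_zero_left, inn_zero_right, mul_zero, add_zero, zero_add,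
          Finset.sum_const_zero]
    have intB : MeasureTheory.Integrable B := by
      apply mkInt
      · exact continuous_finset_sum _ fun i _ => continuous_finset_sum _ fun j _ =>
          (((continuous_inn (cP i) (cV j)).add (continuous_inn (cV i) (cP j))).pow 2).add
            ((continuous_const.mul (continuous_inn (cP i) (cP j))).mul
              (continuous_inn (cV i) (cV j)))
      · intro x hx
        simp only [hB, hker x hx, inn_zero_left, inn_zero_right, mul_zero, add_zero, zero_add,
          Finset.sum_const_zero, ne_eq, OfNat.ofNat_ne_zero, not_false_eq_true, zero_pow]
    have intC : MeasureTheory.Integrable C := by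
      apply mkInt
      · exact continuous_finset_sum _ fun i _ => continuous_finset_sum _ fun j _ =>
          ((continuous_const.mul
            ((continuous_inn (cP i) (cV j)).add (continuous_inn (cV i) (cP j)))).mul
              (continuous_inn (cV i) (cV j)))
      · intro x hx
        simp only [hC, hker x hx, inn_zero_left, inn_zero_right, mul_zero, add_zero, zero_add,
          Finset.sum_const_zero]
    have intD : MeasureTheory.Integrable D := by
      apply mkInt
      · exact continuous_finset_sum _ fun i _ => continuous_finset_sum _ fun j _ =>
          ((continuous_inn (cV i) (cV j)).pow 2)
      · intro x hx
        simp only [hD, hker x hx, inn_zero_left, inn_zero_right, Finset.sum_const_zero, ne_eq,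
          OfNat.ofNat_ne_zero, not_false_eq_true, zero_pow]
    -- the function of t is a polynomial
    have hF : ∀ t : ℝ,
        (∫ x : Fin m → ℝ,
          ((∑ i, ∑ j,
              inn (pd (fun y => φ y + t • v y) i x) (pd (fun y => φ y + t • v y) j x) ^ 2)
            - ∑ i, ∑ j, inn (pd φ i x) (pd φ j x) ^ 2))
        = t * (∫ x, A x) + t ^ 2 * (∫ x, B x) + t ^ 3 * (∫ x, C x) + t ^ 4 * (∫ x, D x) := by
      intro t
      rw [MeasureTheory.integral_congr_ae (Filter.Eventually.of_forall (hpt t))]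
      have e1 : ∫ x : Fin m → ℝ, ((t * A x + t ^ 2 * B x + t ^ 3 * C x) + t ^ 4 * D x)
          = (∫ x : Fin m → ℝ, (t * A x + t ^ 2 * B x + t ^ 3 * C x))
            + ∫ x : Fin m → ℝ, t ^ 4 * D x :=
        MeasureTheory.integral_add (by exact ((intA.const_mul t).add
          (intB.const_mul (t ^ 2))).add (intC.const_mul (t ^ 3)))
          (by exact intD.const_mul (t ^ 4))
      have e2 : ∫ x : Fin m → ℝ, ((t * A x + t ^ 2 * B x) + t ^ 3 * C x)
          = (∫ x : Fin m → ℝ, (t * A x + t ^ 2 * B x)) + ∫ x : Fin m → ℝ, t ^ 3 * C x :=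
        MeasureTheory.integral_add (by exact (intA.const_mul t).add (intB.const_mul (t ^ 2)))
          (by exact intC.const_mul (t ^ 3))
      have e3 : ∫ x : Fin m → ℝ, (t * A x + t ^ 2 * B x)
          = (∫ x : Fin m → ℝ, t * A x) + ∫ x : Fin m → ℝ, t ^ 2 * B x :=
        MeasureTheory.integral_add (by exact intA.const_mul t)
          (by exact intB.const_mul (t ^ 2))
      rw [e1, e2, e3, MeasureTheory.integral_const_mul, MeasureTheory.integral_const_mul,
        MeasureTheory.integral_const_mul, MeasureTheory.integral_const_mul]
    -- derivative of the polynomial at 0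
    have hpoly : HasDerivAt (fun t : ℝ =>
        t * (∫ x, A x) + t ^ 2 * (∫ x, B x) + t ^ 3 * (∫ x, C x) + t ^ 4 * (∫ x, D x))
        (∫ x, A x) 0 := by
      have h1 : HasDerivAt (fun t : ℝ => t * (∫ x, A x)) (∫ x, A x) 0 :=
        hasDerivAt_mul_const _
      have h2 : HasDerivAt (fun t : ℝ => t ^ 2 * (∫ x, B x))
          (((2 : ℕ) * (0 : ℝ) ^ (2 - 1)) * ∫ x, B x) 0 := (hasDerivAt_pow 2 0).mul_const _
      have h3 : HasDerivAt (fun t : ℝ => t ^ 3 * (∫ x, C x))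
          (((3 : ℕ) * (0 : ℝ) ^ (3 - 1)) * ∫ x, C x) 0 := (hasDerivAt_pow 3 0).mul_const _
      have h4 : HasDerivAt (fun t : ℝ => t ^ 4 * (∫ x, D x))
          (((4 : ℕ) * (0 : ℝ) ^ (4 - 1)) * ∫ x, D x) 0 := (hasDerivAt_pow 4 0).mul_const _
      have := ((h1.add h2).add h3).add h4
      exact this.congr_deriv (by norm_num)
    -- identification of the first coefficient via integration by parts
    have ha : (∫ x, A x) = -4 * ∫ x : Fin m → ℝ,
        inn (∑ i, pd (fun y => ∑ j, inn (pd φ i y) (pd φ j y) • pd φ j y) i x) (v x) := by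
      -- smoothness of the stress tensor components
      have hσc : ∀ i : Fin m,
          ContDiff ℝ (⊤ : ℕ∞) (fun y => ∑ j, inn (pd φ i y) (pd φ j y) • pd φ j y) :=
        fun i => ContDiff.sum fun j _ =>
          (contDiff_inn (contDiff_pd hφ i) (contDiff_pd hφ j)).smul (contDiff_pd hφ j)
      -- pointwise rewriting of A
      have hApt : ∀ x : Fin m → ℝ, A x =
          4 * ∑ i, inn ((fun y => ∑ j, inn (pd φ i y) (pd φ j y) • pd φ j y) x)
            (pd v i x) := by
        intro x
        have hs1 : ∀ i : Fin m,
            inn ((fun y => ∑ j, inn (pd φ i y) (pd φ j y) • pd φ j y) x) (pd v i x)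
              = ∑ j, inn (pd φ i x) (pd φ j x) * inn (pd φ j x) (pd v i x) := by
          intro i
          simp only
          rw [inn_sum_left]
          exact Finset.sum_congr rfl fun j _ => inn_smul_left _ _ _
        simp only [hs1, hA, Finset.mul_sum]
        -- split A into two double sums
        have step : ∀ (i j : Fin m),
            2 * inn (pd φ i x) (pd φ j x) * (inn (pd φ i x) (pd v j x) + inn (pd v i x) (pd φ j x))
            = 2 * inn (pd φ i x) (pd φ j x) * inn (pd φ i x) (pd v j x)
              + 2 * inn (pd φ i x) (pd φ j x) * inn (pd φ j x) (pd v i x) := by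
          intro i j
          rw [inn_comm (pd v i x) (pd φ j x)]
          ring
        calc (∑ i, ∑ j, 2 * inn (pd φ i x) (pd φ j x)
                * (inn (pd φ i x) (pd v j x) + inn (pd v i x) (pd φ j x)))
            = ∑ i, ∑ j, (2 * inn (pd φ i x) (pd φ j x) * inn (pd φ i x) (pd v j x)
                + 2 * inn (pd φ i x) (pd φ j x) * inn (pd φ j x) (pd v i x)) := by
              exact Finset.sum_congr rfl fun i _ => Finset.sum_congr rfl fun j _ => step i j
          _ = (∑ i, ∑ j, 2 * inn (pd φ i x) (pd φ j x) * inn (pd φ i x) (pd v j x))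
                + ∑ i, ∑ j, 2 * inn (pd φ i x) (pd φ j x) * inn (pd φ j x) (pd v i x) := by
              simp [Finset.sum_add_distrib]
          _ = (∑ i, ∑ j, 2 * inn (pd φ i x) (pd φ j x) * inn (pd φ j x) (pd v i x))
                + ∑ i, ∑ j, 2 * inn (pd φ i x) (pd φ j x) * inn (pd φ j x) (pd v i x) := by
              congr 1
              rw [Finset.sum_comm]
              exact Finset.sum_congr rfl fun i _ => Finset.sum_congr rfl fun j _ => by
                rw [inn_comm (pd φ j x) (pd φ i x)]
          _ = ∑ i, ∑ j, (4 * (inn (pd φ i x) (pd φ j x) * inn (pd φ j x) (pd v i x))) := by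
              rw [← Finset.sum_add_distrib]
              exact Finset.sum_congr rfl fun i _ => by
                rw [← Finset.sum_add_distrib]
                exact Finset.sum_congr rfl fun j _ => by ring
      -- integrability pieces
      have hσint : ∀ i : Fin m, MeasureTheory.Integrable fun x : Fin m → ℝ =>
          inn ((fun y => ∑ j, inn (pd φ i y) (pd φ j y) • pd φ j y) x) (pd v i x) := by
        intro i
        apply mkInt
        · exact continuous_inn (hσc i).continuous (cV i)
        · intro x hx
          rw [hker x hx i, inn_zero_right]
      have hdint : ∀ i : Fin m, MeasureTheory.Integrable fun x : Fin m → ℝ =>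
          inn (pd (fun y => ∑ j, inn (pd φ i y) (pd φ j y) • pd φ j y) i x) (v x) := by
        intro i
        apply mkInt
        · exact continuous_inn (continuous_pd (hσc i) i) hv.continuous
        · intro x hx
          rw [image_eq_zero_of_notMem_tsupport hx, inn_zero_right]
      -- chain of equalities
      calc (∫ x, A x)
          = ∫ x : Fin m → ℝ, 4 * ∑ i, inn
              ((fun y => ∑ j, inn (pd φ i y) (pd φ j y) • pd φ j y) x) (pd v i x) :=
            MeasureTheory.integral_congr_ae (Filter.Eventually.of_forall hApt)
        _ = 4 * ∫ x : Fin m → ℝ, ∑ i, inn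
              ((fun y => ∑ j, inn (pd φ i y) (pd φ j y) • pd φ j y) x) (pd v i x) :=
            MeasureTheory.integral_const_mul _ _
        _ = 4 * ∑ i, ∫ x : Fin m → ℝ, inn
              ((fun y => ∑ j, inn (pd φ i y) (pd φ j y) • pd φ j y) x) (pd v i x) := by
            rw [MeasureTheory.integral_finset_sum _ fun i _ => hσint i]
        _ = 4 * ∑ i, -∫ x : Fin m → ℝ, inn
              (pd (fun y => ∑ j, inn (pd φ i y) (pd φ j y) • pd φ j y) i x) (v x) := by
            congr 1
            exact Finset.sum_congr rfl fun i _ => ibp (hσc i) hv hvs i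
        _ = -4 * ∑ i, ∫ x : Fin m → ℝ, inn
              (pd (fun y => ∑ j, inn (pd φ i y) (pd φ j y) • pd φ j y) i x) (v x) := by
            rw [Finset.sum_neg_distrib]
            ring
        _ = -4 * ∫ x : Fin m → ℝ, ∑ i, inn
              (pd (fun y => ∑ j, inn (pd φ i y) (pd φ j y) • pd φ j y) i x) (v x) := by
            rw [MeasureTheory.integral_finset_sum _ fun i _ => hdint i]
        _ = -4 * ∫ x : Fin m → ℝ,
              inn (∑ i, pd (fun y => ∑ j, inn (pd φ i y) (pd φ j y) • pd φ j y) i x) (v x) := by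
            congr 1
            exact MeasureTheory.integral_congr_ae (Filter.Eventually.of_forall fun x =>
              (inn_sum_left Finset.univ _ (v x)).symm)
    rw [← ha]
    exact HasDerivAt.congr_of_eventuallyEq hpoly
      (Filter.Eventually.of_forall fun t => hF t)
end

section
/- Let γ : (0,∞) → ℝ be given by γ(t) = t^{15/11}. Then γ is smooth on (0,∞) and for every t > 0 it satisfies the bi-symphonic curve equation 14·γ'(t)²·γ''(t)³ + 17·γ'(t)³·γ''(t)·γ'''(t) + 2·γ'(t)⁴·γ''''(t) = 0, while γ'(t)²·γ''(t) ≠ 0 for every t > 0, so γ is not symphonic at any point. -/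
private lemma deriv_congr_Ioi'' {f g : ℝ → ℝ} (h : ∀ x ∈ Set.Ioi (0:ℝ), f x = g x)
    {t : ℝ} (ht : 0 < t) : deriv f t = deriv g t :=
  Filter.EventuallyEq.deriv_eq <|
    Filter.eventuallyEq_of_mem (isOpen_Ioi.mem_nhds ht) h

private lemma deriv_cmul_rpow'' (c p : ℝ) {t : ℝ} (ht : 0 < t) :
    deriv (fun x : ℝ => c * x ^ p) t = c * p * t ^ (p - 1) := by
  have h := ((Real.hasDerivAt_rpow_const (x := t) (p := p) (Or.inl ht.ne')).const_mul c).deriv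
  rw [h]; ring

/-- The curve `γ(t) = t^{15/11}` on `(0,∞)` is smooth there, satisfies the bi-symphonic curve
equation `14 γ'² (γ'')³ + 17 γ'³ γ'' γ''' + 2 γ'⁴ γ'''' = 0` at every `t > 0`, and is not
symphonic at any point since `γ'² γ'' ≠ 0`. -/
theorem biSymphonic_curve_fifteen_elevenths :
    let γ : ℝ → ℝ := fun t => t ^ ((15 : ℝ) / 11)
    ContDiffOn ℝ (⊤ : ℕ∞) γ (Set.Ioi 0)
      ∧ ∀ t : ℝ, 0 < t →
          (14 * (deriv γ t) ^ 2 * (deriv^[2] γ t) ^ 3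
              + 17 * (deriv γ t) ^ 3 * deriv^[2] γ t * deriv^[3] γ t
              + 2 * (deriv γ t) ^ 4 * deriv^[4] γ t = 0)
            ∧ (deriv γ t) ^ 2 * deriv^[2] γ t ≠ 0 := by
  intro γ
  have h1 : ∀ x ∈ Set.Ioi (0:ℝ), deriv γ x = (15/11) * x ^ ((4:ℝ)/11) := by
    intro x hx
    have := (Real.hasDerivAt_rpow_const (x := x) (p := (15:ℝ)/11) (Or.inl (ne_of_gt hx))).deriv
    rw [this]; norm_num
  have h2 : ∀ x ∈ Set.Ioi (0:ℝ), deriv^[2] γ x = (60/121) * x ^ ((-7:ℝ)/11) := by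
    intro x hx
    rw [show (2:ℕ) = 1+1 from rfl, Function.iterate_succ_apply', Function.iterate_one]
    rw [deriv_congr_Ioi'' h1 hx, deriv_cmul_rpow'' _ _ hx]
    norm_num
  have h3 : ∀ x ∈ Set.Ioi (0:ℝ), deriv^[3] γ x = (-420/1331) * x ^ ((-18:ℝ)/11) := by
    intro x hx
    rw [show (3:ℕ) = 2+1 from rfl, Function.iterate_succ_apply']
    rw [deriv_congr_Ioi'' h2 hx, deriv_cmul_rpow'' _ _ hx]
    norm_num
  have h4 : ∀ x ∈ Set.Ioi (0:ℝ), deriv^[4] γ x = (7560/14641) * x ^ ((-29:ℝ)/11) := by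
    intro x hx
    rw [show (4:ℕ) = 3+1 from rfl, Function.iterate_succ_apply']
    rw [deriv_congr_Ioi'' h3 hx, deriv_cmul_rpow'' _ _ hx]
    norm_num
  constructor
  · intro x hx
    exact (Real.contDiffAt_rpow_const_of_ne (ne_of_gt hx)).contDiffWithinAt
  · intro t ht
    have hts : t ∈ Set.Ioi (0:ℝ) := ht
    set s : ℝ := t ^ ((1:ℝ)/11) with hs
    have hspos : 0 < s := Real.rpow_pos_of_pos ht _
    have key : ∀ n : ℕ, t ^ ((n:ℝ)/11) = s ^ n := by
      intro n
      rw [hs, ← Real.rpow_natCast (t ^ ((1:ℝ)/11)) n, ← Real.rpow_mul ht.le]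
      congr 1; ring
    have keyneg : ∀ n : ℕ, t ^ ((-(n:ℝ))/11) = (s ^ n)⁻¹ := by
      intro n
      rw [show (-(n:ℝ))/11 = -((n:ℝ)/11) by ring, Real.rpow_neg ht.le, key]
    have e1 : t ^ ((4:ℝ)/11) = s ^ 4 := by have := key 4; norm_num at this ⊢; exact this
    have e2 : t ^ ((-7:ℝ)/11) = (s ^ 7)⁻¹ := by have := keyneg 7; norm_num at this ⊢; exact this
    have e3 : t ^ ((-18:ℝ)/11) = (s ^ 18)⁻¹ := by have := keyneg 18; norm_num at this ⊢; exact this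
    rw [h1 t hts, h2 t hts, h3 t hts, h4 t hts]
    have e4 : t ^ ((-29:ℝ)/11) = (s ^ 29)⁻¹ := by have := keyneg 29; norm_num at this ⊢; exact this
    rw [e1, e2, e3, e4]
    constructor
    · field_simp
      ring
    · have hsne : s ≠ 0 := hspos.ne'
      positivity
end

section
/- Let a ∈ ℝ and let γ_a : (0,∞) → ℝ be given by γ_a(t) = t^a. Then for every t > 0, 14·γ_a'(t)²·γ_a''(t)³ + 17·γ_a'(t)³·γ_a''(t)·γ_a'''(t) + 2·γ_a'(t)⁴·γ_a''''(t) = a⁵(a−1)(33a² − 89a + 60)·t^{5a−8}. Consequently, γ_a satisfies the bi-symphonic curve equation at every t > 0 if and only if a ∈ {0, 1, 4/3, 15/11}. -/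
lemma dstep (c b : ℝ) {t : ℝ} (ht : 0 < t) :
    deriv (fun x : ℝ => c * x ^ b) t = c * b * t ^ (b - 1) := by
  have := ((Real.hasDerivAt_rpow_const (p := b) (Or.inl ht.ne')).const_mul c).deriv
  rw [this]; ring

/-- For `γ_a(t) = t^a` on `(0,∞)`, the bi-symphonic expression equals
`a⁵(a−1)(33a² − 89a + 60) t^{5a−8}` for every `t > 0`; consequently `γ_a` satisfies the
bi-symphonic curve equation on `(0,∞)` iff `a ∈ {0, 1, 4/3, 15/11}`. -/
theorem biSymphonic_power_curves (a : ℝ) :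
    let γ : ℝ → ℝ := fun t => t ^ a
    (∀ t : ℝ, 0 < t →
        14 * (deriv γ t) ^ 2 * (deriv^[2] γ t) ^ 3
            + 17 * (deriv γ t) ^ 3 * deriv^[2] γ t * deriv^[3] γ t
            + 2 * (deriv γ t) ^ 4 * deriv^[4] γ t
          = a ^ 5 * (a - 1) * (33 * a ^ 2 - 89 * a + 60) * t ^ (5 * a - 8))
      ∧ ((∀ t : ℝ, 0 < t →
            14 * (deriv γ t) ^ 2 * (deriv^[2] γ t) ^ 3
              + 17 * (deriv γ t) ^ 3 * deriv^[2] γ t * deriv^[3] γ t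
              + 2 * (deriv γ t) ^ 4 * deriv^[4] γ t = 0)
          ↔ a ∈ ({0, 1, 4 / 3, 15 / 11} : Set ℝ)) := by
  intro γ
  have L1 : ∀ t : ℝ, 0 < t → deriv γ t = a * t ^ (a - 1) := fun t ht =>
    Real.deriv_rpow_const t a
  have L2 : ∀ t : ℝ, 0 < t → deriv^[2] γ t = a * (a - 1) * t ^ (a - 2) := by
    intro t ht
    have h : deriv^[2] γ t = deriv (deriv γ) t := by
      rw [Function.iterate_succ_apply', Function.iterate_one]
    have he : deriv γ =ᶠ[nhds t] fun x => a * x ^ (a - 1) := by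
      filter_upwards [eventually_gt_nhds ht] with x hx using L1 x hx
    rw [h, he.deriv_eq, dstep a (a - 1) ht]
    ring_nf
  have L3 : ∀ t : ℝ, 0 < t → deriv^[3] γ t = a * (a - 1) * (a - 2) * t ^ (a - 3) := by
    intro t ht
    have h : deriv^[3] γ t = deriv (deriv^[2] γ) t := by
      rw [Function.iterate_succ_apply']
    have he : deriv^[2] γ =ᶠ[nhds t] fun x => a * (a - 1) * x ^ (a - 2) := by
      filter_upwards [eventually_gt_nhds ht] with x hx using L2 x hx
    rw [h, he.deriv_eq, dstep (a * (a - 1)) (a - 2) ht]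
    ring_nf
  have L4 : ∀ t : ℝ, 0 < t → deriv^[4] γ t = a * (a - 1) * (a - 2) * (a - 3) * t ^ (a - 4) := by
    intro t ht
    have h : deriv^[4] γ t = deriv (deriv^[3] γ) t := by
      rw [Function.iterate_succ_apply']
    have he : deriv^[3] γ =ᶠ[nhds t] fun x => a * (a - 1) * (a - 2) * x ^ (a - 3) := by
      filter_upwards [eventually_gt_nhds ht] with x hx using L3 x hx
    rw [h, he.deriv_eq, dstep (a * (a - 1) * (a - 2)) (a - 3) ht]
    ring_nf
  have main : ∀ t : ℝ, 0 < t →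
      14 * (deriv γ t) ^ 2 * (deriv^[2] γ t) ^ 3
        + 17 * (deriv γ t) ^ 3 * deriv^[2] γ t * deriv^[3] γ t
        + 2 * (deriv γ t) ^ 4 * deriv^[4] γ t
      = a ^ 5 * (a - 1) * (33 * a ^ 2 - 89 * a + 60) * t ^ (5 * a - 8) := by
    intro t ht
    rw [L1 t ht, L2 t ht, L3 t ht, L4 t ht]
    have P : ∀ (m : ℝ) (k : ℕ), (t ^ m) ^ k = t ^ (m * k) := by
      intro m k
      rw [← Real.rpow_natCast (t ^ m) k, ← Real.rpow_mul ht.le]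
    have A : ∀ m n : ℝ, t ^ m * t ^ n = t ^ (m + n) := fun m n => (Real.rpow_add ht m n).symm
    have T1 : (t ^ (a - 1)) ^ 2 * (t ^ (a - 2)) ^ 3 = t ^ (5 * a - 8) := by
      rw [P, P, A]; norm_num; ring_nf
    have T2 : (t ^ (a - 1)) ^ 3 * (t ^ (a - 2) * t ^ (a - 3)) = t ^ (5 * a - 8) := by
      rw [P, A, A]; norm_num; ring_nf
    have T3 : (t ^ (a - 1)) ^ 4 * t ^ (a - 4) = t ^ (5 * a - 8) := by
      rw [P, A]; norm_num; ring_nf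
    calc 14 * (a * t ^ (a - 1)) ^ 2 * (a * (a - 1) * t ^ (a - 2)) ^ 3
          + 17 * (a * t ^ (a - 1)) ^ 3 * (a * (a - 1) * t ^ (a - 2))
            * (a * (a - 1) * (a - 2) * t ^ (a - 3))
          + 2 * (a * t ^ (a - 1)) ^ 4 * (a * (a - 1) * (a - 2) * (a - 3) * t ^ (a - 4))
        = 14 * a ^ 2 * (a * (a - 1)) ^ 3 * ((t ^ (a - 1)) ^ 2 * (t ^ (a - 2)) ^ 3)
          + 17 * a ^ 3 * (a * (a - 1)) * (a * (a - 1) * (a - 2))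
            * ((t ^ (a - 1)) ^ 3 * (t ^ (a - 2) * t ^ (a - 3)))
          + 2 * a ^ 4 * (a * (a - 1) * (a - 2) * (a - 3))
            * ((t ^ (a - 1)) ^ 4 * t ^ (a - 4)) := by ring
      _ = a ^ 5 * (a - 1) * (33 * a ^ 2 - 89 * a + 60) * t ^ (5 * a - 8) := by
          rw [T1, T2, T3]; ring
  refine ⟨main, ?_⟩
  constructor
  · intro h
    have h1 := h 1 one_pos
    rw [main 1 one_pos, Real.one_rpow, mul_one] at h1
    have hfac : a ^ 5 * (a - 1) * ((3 * a - 4) * (11 * a - 15)) = 0 := by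
      rw [← h1]; ring
    simp only [Set.mem_insert_iff, Set.mem_singleton_iff]
    rcases mul_eq_zero.1 hfac with h2 | h2
    · rcases mul_eq_zero.1 h2 with h3 | h3
      · left; exact pow_eq_zero_iff (by norm_num) |>.1 h3
      · right; left; linarith
    · rcases mul_eq_zero.1 h2 with h3 | h3
      · right; right; left; linarith
      · right; right; right; linarith
  · intro ha t ht
    rw [main t ht]
    have : a ^ 5 * (a - 1) * (33 * a ^ 2 - 89 * a + 60) = 0 := by
      simp only [Set.mem_insert_iff, Set.mem_singleton_iff] at ha
      rcases ha with rfl | rfl | rfl | rfl <;> norm_num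
    rw [this, zero_mul]
end
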